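/- Let T₂ be the infinite rooted binary tree and let G be obtained from T₂ by adding, for each end ω of T₂, a new vertex v_ω joined to every vertex of the unique ray of T₂ from the root belonging to ω. Then every end of G is dominated (by the corresponding vertex v_ω), i.e., G has no undominated end. -/

import Mathlib

namespace Paper

variable {V : Type*} {ι : Type*}

def edgeVerts (X : Set (Sym2 V)) : Set V := {v | ∃ e ∈ X, v ∈ e}

def ecompl (G : SimpleGraph V) (X : Set (Sym2 V)) : Set (Sym2 V) := G.edgeSet \ X

def bdry (G : SimpleGraph V) (X : Set (Sym2 V)) : Set V :=
  {v | (∃ e ∈ X, v ∈ e) ∧ ∃ e ∈ ecompl G X, v ∈ e}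

def Nested (G : SimpleGraph V) (X Y : Set (Sym2 V)) : Prop :=
  X ⊆ Y ∨ ecompl G X ⊆ Y ∨ Y ⊆ X ∨ Y ⊆ ecompl G X

def ReachOutside (G : SimpleGraph V) (S : Set V) (u v : V) : Prop :=
  ∃ p : G.Walk u v, ∀ x ∈ p.support, x ∉ S

def IsCompOutside (G : SimpleGraph V) (S : Set V) (C : Set V) : Prop :=
  ∃ v, v ∉ S ∧ C = {u | ReachOutside G S u v}

def sEdges (G : SimpleGraph V) (C : Set V) : Set (Sym2 V) :=
  {e | e ∈ G.edgeSet ∧ ∃ v ∈ C, v ∈ e}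

def IsRay (G : SimpleGraph V) (f : ℕ → V) : Prop :=
  Function.Injective f ∧ ∀ n, G.Adj (f n) (f (n + 1))

def RayEquiv (G : SimpleGraph V) (f g : ℕ → V) : Prop :=
  ∀ S : Set V, S.Finite → ∃ N, ∀ i ≥ N, ∀ j ≥ N, ReachOutside G S (f i) (g j)

def LivesIn (f : ℕ → V) (X : Set (Sym2 V)) : Prop :=
  ∃ N, ∀ n ≥ N, f n ∈ edgeVerts X

def Dominates (G : SimpleGraph V) (v : V) (f : ℕ → V) : Prop :=
  ∃ (g : ℕ → ℕ) (p : (k : ℕ) → G.Walk v (f (g k))),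
    StrictMono g ∧ (∀ k, (p k).IsPath) ∧
    ∀ k l, k ≠ l → ∀ x, x ∈ (p k).support → x ∈ (p l).support → x = v


/-- Vertices: finite 0-1 sequences (nodes of the binary tree `T₂`) plus one
new vertex `v_ω` for every end `ω` of `T₂` (an infinite 0-1 sequence). -/
abbrev V9 : Type := List Bool ⊕ (ℕ → Bool)

/-- The prefix of length `n` of an infinite 0-1 sequence. -/
def prefixOf (s : ℕ → Bool) (n : ℕ) : List Bool := List.ofFn (fun i : Fin n => s i)

def adj9 : V9 → V9 → Prop
  | Sum.inl a, Sum.inl b => (∃ x, b = a ++ [x]) ∨ (∃ x, a = b ++ [x])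
  | Sum.inl a, Sum.inr s => ∃ n, a = prefixOf s n
  | Sum.inr s, Sum.inl a => ∃ n, a = prefixOf s n
  | Sum.inr _, Sum.inr _ => False

/-- The graph obtained from `T₂` by adding, for each end `ω`, a vertex `v_ω`
joined to every vertex of the ray from the root belonging to `ω`. -/
def G9 : SimpleGraph V9 where
  Adj := adj9
  symm := by
    constructor
    rintro (a | s) (b | t) h
    · exact h.symm
    · exact h
    · exact h
    · exact h.elim
  loopless := by
    constructor
    rintro (a | s) h
    · rcases h with ⟨x, hx⟩ | ⟨x, hx⟩ <;>
        · have := congrArg List.length hx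
          simp at this
    · exact h

namespace Aux9

def inS (a : List Bool) : V9 → Prop
  | Sum.inl b => a <+: b
  | Sum.inr t => prefixOf t a.length = a

lemma length_prefixOf (s : ℕ → Bool) (n : ℕ) : (prefixOf s n).length = n := by
  simp [prefixOf]

lemma prefixOf_succ (s : ℕ → Bool) (n : ℕ) :
    prefixOf s (n + 1) = prefixOf s n ++ [s n] := by
  rw [prefixOf, List.ofFn_succ', List.concat_eq_append]
  simp [prefixOf]

lemma prefixOf_mono (s : ℕ → Bool) {m n : ℕ} (h : m ≤ n) :
    prefixOf s m <+: prefixOf s n := by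
  induction n, h using Nat.le_induction with
  | base => exact List.prefix_rfl
  | succ n hmn ih => exact ih.trans ⟨[s n], (prefixOf_succ s n).symm⟩

lemma prefix_eq_of_length {l₁ l₂ l : List Bool} (h1 : l₁ <+: l) (h2 : l₂ <+: l)
    (h : l₁.length = l₂.length) : l₁ = l₂ :=
  (List.prefix_of_prefix_length_le h1 h2 h.le).eq_of_length h

lemma eq_prefixOf_of_prefix {s : ℕ → Bool} {b : List Bool} {k : ℕ}
    (h : b <+: prefixOf s k) : b = prefixOf s b.length := by
  have hl : b.length ≤ k := by simpa [length_prefixOf] using h.length_le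
  exact prefix_eq_of_length h (prefixOf_mono s hl) (by simp [length_prefixOf])

lemma boundary {a : List Bool} {u v : V9} (h : adj9 u v) (hu : inS a u) (hv : ¬ inS a v) :
    ∃ b, v = Sum.inl b ∧ b <+: a ∧ b.length < a.length := by
  cases u with
  | inl b =>
    cases v with
    | inl c =>
      rcases h with ⟨x, rfl⟩ | ⟨x, hx⟩
      · exact absurd (hu.trans (List.prefix_append b [x])) hv
      · subst hx
        have hlen : c.length < a.length := by
          by_contra hle
          push_neg at hle
          exact hv (List.prefix_of_prefix_length_le hu (List.prefix_append c [x]) hle)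
        exact ⟨c, rfl, List.prefix_of_prefix_length_le (List.prefix_append c [x]) hu hlen.le, hlen⟩
    | inr t =>
      obtain ⟨m, rfl⟩ := h
      exact absurd (eq_prefixOf_of_prefix hu).symm hv
  | inr t =>
    cases v with
    | inl c =>
      obtain ⟨m, rfl⟩ := h
      have hm : m < a.length := by
        by_contra hm
        push_neg at hm
        exact hv (hu ▸ prefixOf_mono t hm)
      exact ⟨_, rfl, hu ▸ prefixOf_mono t hm.le, by simpa [length_prefixOf] using hm⟩
    | inr => exact h.elim

lemma child {a : List Bool} {v : V9} (hv : inS a v) (hne : v ≠ Sum.inl a) :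
    inS (a ++ [false]) v ∨ inS (a ++ [true]) v := by
  cases v with
  | inl b =>
    obtain ⟨r, rfl⟩ := hv
    cases r with
    | nil => simp at hne
    | cons x r =>
      cases x
      · exact Or.inl ⟨r, by simp⟩
      · exact Or.inr ⟨r, by simp⟩
  | inr t =>
    have h1 : prefixOf t (a.length + 1) = a ++ [t a.length] := by
      rw [prefixOf_succ, hv]
    cases hx : t a.length
    · left
      show prefixOf t (a ++ [false]).length = a ++ [false]
      have hl : (a ++ [false]).length = a.length + 1 := by simp
      rw [hl, h1, hx]
    · right
      show prefixOf t (a ++ [true]).length = a ++ [true]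
      have hl : (a ++ [true]).length = a.length + 1 := by simp
      rw [hl, h1, hx]

variable {f : ℕ → V9}

lemma exits_finite (hinj : Function.Injective f) (hadj : ∀ n, G9.Adj (f n) (f (n + 1)))
    (a : List Bool) : {m : ℕ | inS a (f m) ∧ ¬ inS a (f (m + 1))}.Finite := by
  have himg : (fun m => f (m + 1)) '' {m | inS a (f m) ∧ ¬ inS a (f (m + 1))} ⊆
      Sum.inl '' {b : List Bool | b <+: a} := by
    rintro _ ⟨m, ⟨h1, h2⟩, rfl⟩
    obtain ⟨b, hb, hba, _⟩ := boundary (hadj m) h1 h2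
    exact ⟨b, hba, hb.symm⟩
  have hfin : (Sum.inl '' {b : List Bool | b <+: a} : Set V9).Finite := by
    apply Set.Finite.image
    refine Set.Finite.subset a.inits.toFinset.finite_toSet ?_
    intro b hb
    simpa [List.mem_inits] using hb
  exact Set.Finite.of_finite_image (hfin.subset himg)
    (fun m _ n _ h => Nat.succ_injective (hinj h))

lemma eventually_inS (hinj : Function.Injective f) (hadj : ∀ n, G9.Adj (f n) (f (n + 1)))
    {a : List Bool} (ha : {n | inS a (f n)}.Infinite) :
    ∃ N, ∀ n ≥ N, inS a (f n) := by
  obtain ⟨B, hB⟩ := (exits_finite hinj hadj a).bddAbove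
  obtain ⟨n₀, hn₀, hBn₀⟩ := ha.exists_gt B
  refine ⟨n₀, ?_⟩
  have key : ∀ k, inS a (f (n₀ + k)) := by
    intro k
    induction k with
    | zero => exact hn₀
    | succ k ih =>
      by_contra hcon
      have hmem : n₀ + k ∈ {m : ℕ | inS a (f m) ∧ ¬ inS a (f (m + 1))} := ⟨ih, hcon⟩
      have := hB hmem
      omega
  intro n hn
  have := key (n - n₀)
  rwa [Nat.add_sub_cancel' hn] at this

def Tset (f : ℕ → V9) : Set (List Bool) := {a | {n | inS a (f n)}.Infinite}

lemma T_nil (f : ℕ → V9) : [] ∈ Tset f := by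
  have huniv : {n | inS ([] : List Bool) (f n)} = Set.univ := by
    ext n
    simp only [Set.mem_univ, iff_true, Set.mem_setOf_eq]
    cases f n with
    | inl b => exact List.nil_prefix
    | inr t => rfl
  rw [Tset, Set.mem_setOf_eq, huniv]
  exact Set.infinite_univ

lemma T_child (hinj : Function.Injective f) {a : List Bool} (ha : a ∈ Tset f) :
    ∃ x, a ++ [x] ∈ Tset f := by
  by_contra hcon
  push_neg at hcon
  have hsub : {n | inS a (f n)} ⊆ {n | f n = Sum.inl a} ∪
      ({n | inS (a ++ [false]) (f n)} ∪ {n | inS (a ++ [true]) (f n)}) := by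
    intro n hn
    by_cases he : f n = Sum.inl a
    · exact Or.inl he
    · exact Or.inr (child hn he)
  have h1 : {n | f n = Sum.inl a}.Finite :=
    Set.Subsingleton.finite (fun m hm n hn => hinj (hm.trans hn.symm))
  have h2 : {n | inS (a ++ [false]) (f n)}.Finite := Set.not_infinite.1 (hcon false)
  have h3 : {n | inS (a ++ [true]) (f n)}.Finite := Set.not_infinite.1 (hcon true)
  exact ha (Set.Finite.subset (h1.union (h2.union h3)) hsub)

open Classical in
noncomputable def nxt (f : ℕ → V9) (a : List Bool) : Bool :=
  if h : ∃ x, a ++ [x] ∈ Tset f then h.choose else false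

noncomputable def bl (f : ℕ → V9) : ℕ → List Bool
  | 0 => []
  | n + 1 => bl f n ++ [nxt f (bl f n)]

lemma bl_mem (hinj : Function.Injective f) : ∀ n, bl f n ∈ Tset f
  | 0 => T_nil f
  | n + 1 => by
    have h := T_child hinj (bl_mem hinj n)
    show bl f n ++ [nxt f (bl f n)] ∈ Tset f
    rw [nxt, dif_pos h]
    exact h.choose_spec

lemma bl_length (f : ℕ → V9) : ∀ n, (bl f n).length = n
  | 0 => rfl
  | n + 1 => by simp [bl, bl_length f n]

noncomputable def sb (f : ℕ → V9) : ℕ → Bool := fun n => nxt f (bl f n)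

lemma prefixOf_sb (f : ℕ → V9) : ∀ n, prefixOf (sb f) n = bl f n
  | 0 => by simp [prefixOf, bl]
  | n + 1 => by rw [prefixOf_succ, prefixOf_sb f n]; rfl

lemma escape {v : V9} (hv : v ≠ Sum.inr (sb f)) : ∃ K, ¬ inS (bl f K) v := by
  cases v with
  | inl b =>
    refine ⟨b.length + 1, fun h => ?_⟩
    have hl := h.length_le
    rw [bl_length] at hl
    omega
  | inr t =>
    have ht : t ≠ sb f := fun h => hv (by rw [h])
    obtain ⟨i, hi⟩ : ∃ i, t i ≠ sb f i := by
      by_contra h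
      push_neg at h
      exact ht (funext h)
    refine ⟨i + 1, fun h => ?_⟩
    have h' : prefixOf t (bl f (i + 1)).length = bl f (i + 1) := h
    rw [bl_length, ← prefixOf_sb] at h'
    apply hi
    have hb : i < (prefixOf t (i + 1)).length := by
      rw [length_prefixOf]; omega
    have := List.getElem_of_eq h' hb
    simp only [prefixOf, List.getElem_ofFn] at this
    exact this

lemma freq (hinj : Function.Injective f) (hadj : ∀ n, G9.Adj (f n) (f (n + 1))) (M : ℕ) :
    ∃ n ≥ M, G9.Adj (Sum.inr (sb f)) (f n) := by
  classical
  have hne : f M ≠ f (M + 1) := fun h => by have := hinj h; omega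
  obtain ⟨n1, hn1M, hn1⟩ : ∃ n1, M ≤ n1 ∧ f n1 ≠ Sum.inr (sb f) := by
    by_cases h : f M = Sum.inr (sb f)
    · exact ⟨M + 1, by omega, fun h' => hne (h.trans h'.symm)⟩
    · exact ⟨M, le_rfl, h⟩
  obtain ⟨K, hK⟩ := escape hn1
  obtain ⟨N, hN⟩ := eventually_inS hinj hadj (bl_mem hinj K)
  set P : ℕ → Prop := fun m => M ≤ m ∧ ¬ inS (bl f K) (f m) with hPdef
  have hn1P : P n1 := ⟨hn1M, hK⟩
  have hn1N : n1 ≤ N := by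
    by_contra h
    push_neg at h
    exact hK (hN n1 h.le)
  set m := Nat.findGreatest P N with hm
  have hPm : P m := Nat.findGreatest_spec hn1N hn1P
  have hmN : m < N := by
    rcases Nat.lt_or_ge m N with h | h
    · exact h
    · exact absurd (hN m h) hPm.2
  have hnext : inS (bl f K) (f (m + 1)) := by
    by_contra h
    exact Nat.findGreatest_is_greatest (Nat.lt_succ_self m) (by omega) ⟨by omega, h⟩
  obtain ⟨b, hb, hba, _⟩ := boundary ((hadj m).symm) hnext hPm.2
  refine ⟨m, hPm.1, ?_⟩
  rw [hb]
  show ∃ n, b = prefixOf (sb f) n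
  rw [← prefixOf_sb] at hba
  exact ⟨b.length, eq_prefixOf_of_prefix hba⟩

end Aux9

theorem stmt9 (f : ℕ → V9) (hf : IsRay G9 f) :
    ∃ v : V9, Dominates G9 v f := by
  obtain ⟨hinj, hadj⟩ := hf
  have hfreq : ∃ᶠ n in Filter.atTop, G9.Adj (Sum.inr (Aux9.sb f)) (f n) :=
    Filter.frequently_atTop.2 (Aux9.freq hinj hadj)
  obtain ⟨g, hg, hgP⟩ := Filter.extraction_of_frequently_atTop hfreq
  refine ⟨Sum.inr (Aux9.sb f), g,
    fun k => SimpleGraph.Walk.cons (hgP k) SimpleGraph.Walk.nil, hg, fun k => ?_, ?_⟩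
  · simp [SimpleGraph.Walk.isPath_def, (hgP k).ne]
  · intro k l hkl x hxk hxl
    simp only [SimpleGraph.Walk.support_cons, SimpleGraph.Walk.support_nil,
      List.mem_cons, List.not_mem_nil, or_false] at hxk hxl
    rcases hxk with rfl | rfl
    · rfl
    · rcases hxl with h | h
      · exact h
      · exact absurd (hg.injective (hinj h)) hkl


end Paper
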